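/- Let K be a simplicial complex on [m], let K_1,…,K_m be simplicial complexes on finite vertex sets V_1,…,V_m, and let K(K_1,…,K_m) be the substitution complex on V = V_1 ⊔ ⋯ ⊔ V_m. Let (G_v)_{v∈V} be a family of groups. Then the graph product of the family (G_v)_{v∈V} over the simplicial complex K(K_1,…,K_m) is isomorphic to the graph product over K of the groups H_1,…,H_m, where H_t is the graph product of (G_v)_{v∈V_t} over K_t, via the isomorphism matching the canonical homomorphism from G_v (v ∈ V_t) into the first group with the composite G_v → H_t → (H_1,…,H_m)^K of canonical homomorphisms. -/

import Mathlib

open Monoid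

/-- The graph product of a family of groups `(G i)_{i ∈ ι}` over a simplicial complex
`K` on the vertex set `ι`: the quotient of the free product by the normal closure of the
commutators `g_u⁻¹ g_w⁻¹ g_u g_w` for edges `{u, w} ∈ K`. -/
def graphProduct {ι : Type} [DecidableEq ι] (K : Set (Finset ι)) (G : ι → Type)
    [∀ i, Group (G i)] : Type :=
  CoprodI G ⧸ Subgroup.normalClosure
    {x | ∃ (u w : ι) (gu : G u) (gw : G w), u ≠ w ∧ ({u, w} : Finset ι) ∈ K ∧
      x = (CoprodI.of gu)⁻¹ * (CoprodI.of gw)⁻¹ * CoprodI.of gu * CoprodI.of gw}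

instance {ι : Type} [DecidableEq ι] (K : Set (Finset ι)) (G : ι → Type)
    [∀ i, Group (G i)] : Group (graphProduct K G) :=
  inferInstanceAs (Group (_ ⧸ _))

/-- The canonical homomorphism `G i → graphProduct K G`. -/
def gpOf {ι : Type} [DecidableEq ι] (K : Set (Finset ι)) (G : ι → Type)
    [∀ i, Group (G i)] (i : ι) : G i →* graphProduct K G :=
  (QuotientGroup.mk' _).comp CoprodI.of

section API
variable {ι : Type} [DecidableEq ι] (K : Set (Finset ι)) (G : ι → Type)
    [∀ i, Group (G i)] {H : Type} [Group H]

theorem gp_commute {u w : ι} (huw : u ≠ w) (hK : ({u, w} : Finset ι) ∈ K)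
    (gu : G u) (gw : G w) : Commute (gpOf K G u gu) (gpOf K G w gw) := by
  have h : (QuotientGroup.mk' _ : CoprodI G →* graphProduct K G)
      ((CoprodI.of gu)⁻¹ * (CoprodI.of gw)⁻¹ * CoprodI.of gu * CoprodI.of gw) = 1 := by
    rw [QuotientGroup.mk'_apply, QuotientGroup.eq_one_iff]
    exact Subgroup.subset_normalClosure ⟨u, w, gu, gw, huw, hK, rfl⟩
  have := h
  simp only [map_mul, map_inv] at this
  have h2 : (gpOf K G u gu)⁻¹ * (gpOf K G w gw)⁻¹ * gpOf K G u gu * gpOf K G w gw = 1 := this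
  have h3 : gpOf K G u gu * gpOf K G w gw = gpOf K G w gw * gpOf K G u gu := by
    have h5 := congrArg (fun z => gpOf K G w gw * gpOf K G u gu * z) h2
    simpa [mul_assoc] using h5
  exact h3

def gpLift (f : ∀ i, G i →* H)
    (hf : ∀ u w : ι, u ≠ w → ({u, w} : Finset ι) ∈ K →
      ∀ (gu : G u) (gw : G w), Commute (f u gu) (f w gw)) :
    graphProduct K G →* H :=
  QuotientGroup.lift _ (CoprodI.lift f) (fun x hx => by
    revert x
    rw [← SetLike.le_def]
    refine Subgroup.normalClosure_le_normal ?_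
    rintro x ⟨u, w, gu, gw, huw, hK, rfl⟩
    have hc := hf u w huw hK gu gw
    simp only [SetLike.mem_coe, MonoidHom.mem_ker, map_mul, map_inv, CoprodI.lift_of]
    rw [Commute, SemiconjBy] at hc
    have : ((f u) gu)⁻¹ * ((f w) gw)⁻¹ * ((f u) gu * (f w) gw) = 1 := by rw [hc]; group
    simpa [mul_assoc] using this)

@[simp] theorem gpLift_of (f : ∀ i, G i →* H) (hf) (i : ι) (g : G i) :
    gpLift K G f hf (gpOf K G i g) = f i g := by
  simp [gpLift, gpOf, CoprodI.lift_of]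
  rfl

theorem gp_hom_ext {f g : graphProduct K G →* H}
    (h : ∀ (i : ι) (x : G i), f (gpOf K G i x) = g (gpOf K G i x)) : f = g := by
  apply QuotientGroup.monoidHom_ext
  apply CoprodI.ext_hom
  intro i
  ext x
  exact h i x

theorem gp_induction {C : graphProduct K G → Prop} (x : graphProduct K G)
    (h1 : C 1) (hof : ∀ (i : ι) (g : G i), C (gpOf K G i g))
    (hmul : ∀ a b, C a → C b → C (a * b)) : C x := by
  obtain ⟨y, rfl⟩ := QuotientGroup.mk'_surjective _ x
  induction y using CoprodI.induction_on with
  | one => rw [map_one]; exact h1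
  | of i g => exact hof i g
  | mul a b ha hb => rw [map_mul]; exact hmul _ _ ha hb

theorem gp_commute_hom (f : graphProduct K G →* H) (c : H)
    (hc : ∀ (i : ι) (g : G i), Commute c (f (gpOf K G i g))) (x : graphProduct K G) :
    Commute c (f x) := by
  induction x using gp_induction with
  | h1 => rw [map_one]; exact Commute.one_right c
  | hof i g => exact hc i g
  | hmul a b ha hb => rw [map_mul]; exact ha.mul_right hb

end API

/-- The substitution complex `K(K_1, …, K_m)` on `V_1 ⊔ ⋯ ⊔ V_m`: its faces are the
sets `I_{j_1} ⊔ ⋯ ⊔ I_{j_k}` with `I_{j_l} ∈ K_{j_l}` and `{j_1,…,j_k} ∈ K`;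
equivalently, the finsets `F` whose projection to `[m]` is a face of `K` and whose
slice over each `t` is a face of `K_t`. -/
def substComplex {m : ℕ} (K : Set (Finset (Fin m))) {V : Fin m → Type}
    [∀ t, DecidableEq (V t)] (Kt : (t : Fin m) → Set (Finset (V t))) :
    Set (Finset (Σ t : Fin m, V t)) :=
  {F | F.image Sigma.fst ∈ K ∧
    ∀ t : Fin m, F.preimage (Sigma.mk t) sigma_mk_injective.injOn ∈ Kt t}

section SubstLemmas

variable {m : ℕ} {K : Set (Finset (Fin m))} {V : Fin m → Type}
    [∀ t, DecidableEq (V t)] {Kt : (t : Fin m) → Set (Finset (V t))}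

theorem pair_mem_subst_same
    (hdown : ∀ I ∈ K, ∀ J ⊆ I, J ∈ K) (hsingle : ∀ i : Fin m, ({i} : Finset (Fin m)) ∈ K)
    (hdown' : ∀ t, ∀ I ∈ Kt t, ∀ J ⊆ I, J ∈ Kt t) (hempty' : ∀ t, ∅ ∈ Kt t)
    {t : Fin m} {v v' : V t} (h : ({v, v'} : Finset (V t)) ∈ Kt t) :
    ({⟨t, v⟩, ⟨t, v'⟩} : Finset (Σ t, V t)) ∈ substComplex K Kt := by
  constructor
  · refine hdown _ (hsingle t) _ ?_
    intro x hx
    simp only [Finset.mem_image, Finset.mem_insert, Finset.mem_singleton] at hx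
    obtain ⟨a, ha | ha, rfl⟩ := hx <;> subst ha <;> simp
  · intro s
    by_cases hs : s = t
    · subst hs
      refine hdown' s _ h _ ?_
      intro x hx
      simp only [Finset.mem_preimage, Finset.mem_insert, Finset.mem_singleton,
        Sigma.mk.inj_iff, heq_eq_eq, true_and] at hx
      simpa using hx
    · have : ({⟨t, v⟩, ⟨t, v'⟩} : Finset (Σ t, V t)).preimage (Sigma.mk s)
          sigma_mk_injective.injOn = ∅ := by
        ext x
        simp [Finset.mem_preimage, Sigma.mk.inj_iff, hs]
      rw [this]; exact hempty' s

theorem pair_mem_subst_ne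
    (hdown : ∀ I ∈ K, ∀ J ⊆ I, J ∈ K)
    (hdown' : ∀ t, ∀ I ∈ Kt t, ∀ J ⊆ I, J ∈ Kt t) (hempty' : ∀ t, ∅ ∈ Kt t)
    (hsingle' : ∀ t, ∀ v : V t, ({v} : Finset (V t)) ∈ Kt t)
    {t t' : Fin m} (htt : t ≠ t') (hK : ({t, t'} : Finset (Fin m)) ∈ K)
    (v : V t) (v' : V t') :
    ({⟨t, v⟩, ⟨t', v'⟩} : Finset (Σ t, V t)) ∈ substComplex K Kt := by
  constructor
  · refine hdown _ hK _ ?_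
    intro x hx
    simp only [Finset.mem_image, Finset.mem_insert, Finset.mem_singleton] at hx ⊢
    obtain ⟨a, ha | ha, rfl⟩ := hx <;> subst ha <;> simp
  · intro s
    by_cases hs : s = t
    · subst hs
      refine hdown' s _ (hsingle' s v) _ ?_
      intro x hx
      simp only [Finset.mem_preimage, Finset.mem_insert, Finset.mem_singleton,
        Sigma.mk.inj_iff, heq_eq_eq] at hx
      rcases hx with ⟨_, rfl⟩ | ⟨h1, _⟩
      · simp
      · exact absurd h1 htt
    · by_cases hs' : s = t'
      · subst hs'
        refine hdown' s _ (hsingle' s v') _ ?_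
        intro x hx
        simp only [Finset.mem_preimage, Finset.mem_insert, Finset.mem_singleton,
          Sigma.mk.inj_iff, heq_eq_eq] at hx
        rcases hx with ⟨h1, _⟩ | ⟨_, rfl⟩
        · exact absurd h1.symm htt
        · simp
      · have : ({⟨t, v⟩, ⟨t', v'⟩} : Finset (Σ t, V t)).preimage (Sigma.mk s)
            sigma_mk_injective.injOn = ∅ := by
          ext x
          simp [Finset.mem_preimage, Sigma.mk.inj_iff, hs, hs']
        rw [this]; exact hempty' s


end SubstLemmas

/-- The graph product of the family `(G_v)_{v ∈ V_1 ⊔ ⋯ ⊔ V_m}` over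
the substitution complex `K(K_1,…,K_m)` is isomorphic to the graph product over `K` of
the graph products `H_t` of `(G_v)_{v ∈ V_t}` over `K_t`, compatibly with the canonical
homomorphisms from the `G_v`. -/
theorem substComplex_graphProduct {m : ℕ} (K : Set (Finset (Fin m)))
    (hdown : ∀ I ∈ K, ∀ J ⊆ I, J ∈ K) (hempty : ∅ ∈ K)
    (hsingle : ∀ i : Fin m, ({i} : Finset (Fin m)) ∈ K)
    (V : Fin m → Type) [∀ t, DecidableEq (V t)] [∀ t, Fintype (V t)]
    (Kt : (t : Fin m) → Set (Finset (V t)))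
    (hdown' : ∀ t, ∀ I ∈ Kt t, ∀ J ⊆ I, J ∈ Kt t) (hempty' : ∀ t, ∅ ∈ Kt t)
    (hsingle' : ∀ t, ∀ v : V t, ({v} : Finset (V t)) ∈ Kt t)
    (G : (Σ t : Fin m, V t) → Type) [∀ v, Group (G v)] :
    ∃ e : graphProduct (substComplex K Kt) G ≃*
        graphProduct K (fun t => graphProduct (Kt t) (fun v : V t => G ⟨t, v⟩)),
      ∀ (t : Fin m) (v : V t) (g : G ⟨t, v⟩),
        e (gpOf (substComplex K Kt) G ⟨t, v⟩ g) =
          gpOf K (fun t => graphProduct (Kt t) (fun v : V t => G ⟨t, v⟩)) t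
            (gpOf (Kt t) (fun v : V t => G ⟨t, v⟩) v g) := by
  classical
  set HG : Fin m → Type := fun t => graphProduct (Kt t) (fun v : V t => G ⟨t, v⟩) with hHG
  -- forward homomorphism
  have Fcomm : ∀ u w : (Σ t, V t), u ≠ w → ({u, w} : Finset (Σ t, V t)) ∈ substComplex K Kt →
      ∀ (gu : G u) (gw : G w),
        Commute ((gpOf K HG u.1).comp (gpOf (Kt u.1) (fun v : V u.1 => G ⟨u.1, v⟩) u.2) gu)
          ((gpOf K HG w.1).comp (gpOf (Kt w.1) (fun v : V w.1 => G ⟨w.1, v⟩) w.2) gw) := by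
    rintro ⟨t, v⟩ ⟨t', v'⟩ hne hmem gu gw
    by_cases ht : t = t'
    · subst ht
      have hvv : v ≠ v' := fun h => hne (by rw [h])
      have hpre := hmem.2 t
      have hpe : ({⟨t, v⟩, ⟨t, v'⟩} : Finset (Σ t, V t)).preimage (Sigma.mk t)
          sigma_mk_injective.injOn = {v, v'} := by
        ext x
        simp [Finset.mem_preimage, Sigma.mk.inj_iff]
      rw [hpe] at hpre
      exact (gp_commute (Kt t) (fun v : V t => G ⟨t, v⟩) hvv hpre gu gw).map (gpOf K HG t)
    · have himg := hmem.1
      have hie : ({⟨t, v⟩, ⟨t', v'⟩} : Finset (Σ t, V t)).image Sigma.fst = {t, t'} := by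
        ext s
        simp [Finset.mem_image]
      rw [hie] at himg
      exact gp_commute K HG ht himg _ _
  set F : graphProduct (substComplex K Kt) G →* graphProduct K HG :=
    gpLift (substComplex K Kt) G
      (fun u => (gpOf K HG u.1).comp (gpOf (Kt u.1) (fun v : V u.1 => G ⟨u.1, v⟩) u.2)) Fcomm
    with hF
  -- backward homomorphism
  set φ : ∀ t, HG t →* graphProduct (substComplex K Kt) G := fun t =>
    gpLift (Kt t) (fun v : V t => G ⟨t, v⟩) (fun v => gpOf (substComplex K Kt) G ⟨t, v⟩)
      (fun v v' hne hK gu gw =>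
        gp_commute (substComplex K Kt) G (fun h => hne (by injection h))
          (pair_mem_subst_same hdown hsingle hdown' hempty' hK) gu gw)
    with hφ
  have Bcomm : ∀ t t' : Fin m, t ≠ t' → ({t, t'} : Finset (Fin m)) ∈ K →
      ∀ (x : HG t) (y : HG t'), Commute (φ t x) (φ t' y) := by
    intro t t' htt hK x y
    refine (gp_commute_hom (Kt t') (fun v : V t' => G ⟨t', v⟩) (φ t') (φ t x) ?_ y)
    intro v' g'
    refine ((gp_commute_hom (Kt t) (fun v : V t => G ⟨t, v⟩) (φ t)
        (φ t' (gpOf (Kt t') (fun v : V t' => G ⟨t', v⟩) v' g')) ?_ x)).symm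
    intro v g
    rw [hφ]
    simp only [gpLift_of]
    have hK' : ({t', t} : Finset (Fin m)) ∈ K := by
      rw [Finset.pair_comm]; exact hK
    have hne' : (⟨t', v'⟩ : Σ t, V t) ≠ ⟨t, v⟩ := by
      intro h; exact htt.symm (congrArg Sigma.fst h)
    exact gp_commute (substComplex K Kt) G hne'
      (pair_mem_subst_ne hdown hdown' hempty' hsingle' htt.symm hK' v' v) g' g
  set B : graphProduct K HG →* graphProduct (substComplex K Kt) G :=
    gpLift K HG φ Bcomm with hB
  have h1 : B.comp F = MonoidHom.id _ := by
    apply gp_hom_ext (substComplex K Kt) G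
    rintro ⟨t, v⟩ g
    simp only [hB, hF, hφ]
    simp only [MonoidHom.comp_apply, gpLift_of, MonoidHom.id_apply]
    rw [gpLift_of]
  have h2 : F.comp B = MonoidHom.id _ := by
    apply gp_hom_ext K HG
    intro t x
    have hext : ((F.comp B).comp (gpOf K HG t)) = gpOf K HG t := by
      apply gp_hom_ext (Kt t) (fun v : V t => G ⟨t, v⟩)
      intro v g
      simp only [hB, hF, hφ]
      simp only [MonoidHom.comp_apply, gpLift_of]
      rw [gpLift_of, gpLift_of]
      rfl
    have := DFunLike.congr_fun hext x
    simpa using this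
  refine ⟨MonoidHom.toMulEquiv F B h1 h2, ?_⟩
  intro t v g
  show F (gpOf (substComplex K Kt) G ⟨t, v⟩ g) = _
  rw [hF]
  simp only [gpLift_of, MonoidHom.comp_apply]
  rfl
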